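/- The reduction relation on normalized state formulas is terminating: there is no infinite sequence S₀ ⟶ S₁ ⟶ S₂ ⟶ ⋯ of reduction steps, where each step either decomposes a guard (f s₁ ⋯ s_k) = (f t₁ ⋯ t_k) into the k argument guards, eliminates a universally quantified variable y via a guard y = t (y not a rigid subterm of t) by substitution, or replaces a guarded goal by ⊤ when a guard y = t has y a rigid subterm of t. -/

import Mathlib

/-- Terms: de Bruijn universal variables, constants applied to arguments,
    and existential (logic) variables applied to arguments. -/
inductive Tm : Type where
  | var : Nat → Tm
  | app : Nat → List Tm → Tm
  | evar : Nat → List Tm → Tm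

namespace Tm

/-- Substitution for the universal variables. -/
def subst (σ : Nat → Tm) : Tm → Tm
  | var n => σ n
  | app f ts => app f (ts.attach.map (fun t => subst σ t.1))
  | evar e ts => evar e (ts.attach.map (fun t => subst σ t.1))
  decreasing_by all_goals (have := List.sizeOf_lt_of_mem t.2; simp at this ⊢; omega)

/-- A term with no existential variables. -/
inductive NoEvar : Tm → Prop where
  | var : NoEvar (var n)
  | app : (∀ t ∈ ts, NoEvar t) → NoEvar (app f ts)

/-- The existential variable `e` occurs in the term. -/
inductive EvOcc (e : Nat) : Tm → Prop where
  | here : ∀ {ts}, EvOcc e (evar e ts)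
  | app : ∀ {f ts t}, t ∈ ts → EvOcc e t → EvOcc e (app f ts)
  | evar : ∀ {x ts t}, t ∈ ts → EvOcc e t → EvOcc e (evar x ts)

/-- Apply a λ-abstraction body (parameters = de Bruijn variables) to a list
    of arguments. -/
def applyBody (b : Tm) (args : List Tm) : Tm :=
  b.subst (fun i => args.getD i (.app 0 []))

/-- Instantiate the existential variables using the bodies `θ`. -/
def inst (θ : Nat → Tm) : Tm → Tm
  | var n => var n
  | app f ts => app f (ts.attach.map (fun t => inst θ t.1))
  | evar e ts => applyBody (θ e) (ts.attach.map (fun t => inst θ t.1))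
  decreasing_by all_goals (have := List.sizeOf_lt_of_mem t.2; simp at this ⊢; omega)

/-- Apply a partial substitution for existential variables. -/
def instO (ρ : Nat → Option Tm) : Tm → Tm
  | var n => var n
  | app f ts => app f (ts.attach.map (fun t => instO ρ t.1))
  | evar e ts =>
      match ρ e with
      | some b => applyBody b (ts.attach.map (fun t => instO ρ t.1))
      | none => evar e (ts.attach.map (fun t => instO ρ t.1))
  decreasing_by all_goals (have := List.sizeOf_lt_of_mem t.2; simp at this ⊢; omega)

end Tm

/-- Composition of a partial existential substitution with a solution. -/
def compSub (ρ : Nat → Option Tm) (θ : Nat → Tm) : Nat → Tm :=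
  fun n => match ρ n with
  | some b => b.inst θ
  | none => θ n

/-- Targets of guarded goals: an equality, ⊥, or an atom. -/
inductive Tgt : Type where
  | eq : Tm → Tm → Tgt
  | bot : Tgt
  | atom : Nat → List Tm → Tgt

def Tgt.map (F : Tm → Tm) : Tgt → Tgt
  | eq s t => eq (F s) (F t)
  | bot => bot
  | atom p ts => atom p (ts.map F)

/-- A guarded goal `∀ȳ.(u₁ = v₁ → ⋯ → uₘ = vₘ → B)`: `univ` universal
    variables, a list of guards, and a target. -/
structure GGoal : Type where
  univ : Nat
  guards : List (Tm × Tm)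
  target : Tgt

def GGoal.map (F : Tm → Tm) (g : GGoal) : GGoal :=
  ⟨g.univ, g.guards.map (fun q => (F q.1, F q.2)), g.target.map F⟩

/-- A state formula `∃h̄.(G₁ ∧ ⋯ ∧ Gₙ)`: the existential variables `h̄` are
    left implicit, the conjuncts are the guarded goals. -/
abbrev StateF := List GGoal

/-- The existential variable `e` occurs in the state. -/
def EvOccS (e : Nat) (S : StateF) : Prop :=
  ∃ g ∈ S, (∃ q ∈ g.guards, Tm.EvOcc e q.1 ∨ Tm.EvOcc e q.2) ∨
    (match g.target with
     | .eq s t => Tm.EvOcc e s ∨ Tm.EvOcc e t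
     | .bot => False
     | .atom _ ts => ∃ t ∈ ts, Tm.EvOcc e t)

/-- A guarded goal holds under an interpretation `A` of the atoms and an
    instantiation `θ` of the existential variables: for every substitution of
    (evar-free) terms for the universal variables that unifies all the guards,
    the corresponding instance of the target holds, with equality read as
    syntactic equality of terms (this is provability in intuitionistic logic
    with the left and right equality rules, for this fragment). -/
def GoalHolds (A : Nat → List Tm → Prop) (θ : Nat → Tm) (g : GGoal) : Prop :=
  ∀ σ : Nat → Tm, (∀ n, (σ n).NoEvar) →
    (∀ q ∈ g.guards, Tm.subst σ (Tm.inst θ q.1) = Tm.subst σ (Tm.inst θ q.2)) →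
    match g.target with
    | .eq u v => Tm.subst σ (Tm.inst θ u) = Tm.subst σ (Tm.inst θ v)
    | .bot => False
    | .atom p ts => A p (ts.map (fun t => Tm.subst σ (Tm.inst θ t)))

/-- A definite clause `∀ū.(G → p s̄)`: the clause-local existential
    variables `ū` appear as evars in `args` and `body`. -/
structure Clause : Type where
  pred : Nat
  args : List Tm
  body : List GGoal

abbrev Program := List Clause

/-- An interpretation `A` of the atoms satisfies a clause. -/
def ClauseHolds (A : Nat → List Tm → Prop) (c : Clause) : Prop :=
  ∀ θ : Nat → Tm, (∀ n, (θ n).NoEvar) →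
    (∀ g ∈ c.body, GoalHolds A θ g) →
    ∀ σ : Nat → Tm, (∀ n, (σ n).NoEvar) →
      A c.pred (c.args.map (fun t => Tm.subst σ (Tm.inst θ t)))

/-- `A` is a model of the program `P`. -/
def Model (A : Nat → List Tm → Prop) (P : Program) : Prop :=
  ∀ c ∈ P, ClauseHolds A c

/-- `θ` is a solution for the state `S` under the program `P`: instantiating
    the existential variables by (evar-free) bodies `θ` makes every guarded
    goal provable, atoms being interpreted in any model of `P`. -/
def Sol (P : Program) (S : StateF) (θ : Nat → Tm) : Prop :=
  (∀ n, (θ n).NoEvar) ∧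
  ∀ A : Nat → List Tm → Prop, Model A P → ∀ g ∈ S, GoalHolds A θ g

/-- `s` is an immediate rigid subterm of `t` (argument of a constant head). -/
inductive RSub : Tm → Tm → Prop where
  | mk : ∀ {s f ts}, s ∈ ts → RSub s (.app f ts)

/-- `s` is a rigid subterm of `t`. -/
def RigidSub (s t : Tm) : Prop := Relation.TransGen RSub s t

/-- The substitution eliminating universal variable `y` in favour of `t`:
    `y` is replaced by `t` and the remaining variables are renumbered. -/
def elimSub (y : Nat) (t : Tm) : Nat → Tm :=
  fun k => if k = y then t.subst (fun j => .var (if y < j then j - 1 else j))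
           else .var (if y < k then k - 1 else k)

/-- One step of reduction of normalized state formulas:
    decomposition of a guard with equal constant heads, elimination of a
    universal variable through a guard `y = t` (or `t = y`) with `y` not a
    rigid subterm of `t`, and the occurs check replacing a guarded goal by ⊤
    (i.e., deleting it) when `y` is a rigid subterm of `t`. -/
inductive Red : StateF → StateF → Prop where
  | dec : ∀ {S₁ S₂ : StateF} {m f Q₁ Q₂ B} {ts ss : List Tm},
      ts.length = ss.length →
      Red (S₁ ++ ⟨m, Q₁ ++ (.app f ts, .app f ss) :: Q₂, B⟩ :: S₂)
          (S₁ ++ ⟨m, Q₁ ++ ts.zip ss ++ Q₂, B⟩ :: S₂)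
  | elimL : ∀ {S₁ S₂ : StateF} {m y t Q₁ Q₂ B},
      y < m → ¬ RigidSub (.var y) t →
      Red (S₁ ++ ⟨m, Q₁ ++ (.var y, t) :: Q₂, B⟩ :: S₂)
          (S₁ ++ GGoal.map (Tm.subst (elimSub y t)) ⟨m - 1, Q₁ ++ Q₂, B⟩ :: S₂)
  | elimR : ∀ {S₁ S₂ : StateF} {m y t Q₁ Q₂ B},
      y < m → ¬ RigidSub (.var y) t →
      Red (S₁ ++ ⟨m, Q₁ ++ (t, .var y) :: Q₂, B⟩ :: S₂)
          (S₁ ++ GGoal.map (Tm.subst (elimSub y t)) ⟨m - 1, Q₁ ++ Q₂, B⟩ :: S₂)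
  | occL : ∀ {S₁ S₂ : StateF} {m y t Q₁ Q₂ B},
      y < m → RigidSub (.var y) t →
      Red (S₁ ++ ⟨m, Q₁ ++ (.var y, t) :: Q₂, B⟩ :: S₂) (S₁ ++ S₂)
  | occR : ∀ {S₁ S₂ : StateF} {m y t Q₁ Q₂ B},
      y < m → RigidSub (.var y) t →
      Red (S₁ ++ ⟨m, Q₁ ++ (t, .var y) :: Q₂, B⟩ :: S₂) (S₁ ++ S₂)

section TerminationAux

open Ordinal

mutual
def tsize : Tm → ℕ
  | .var _ => 1
  | .app _ ts => 1 + tsizeL ts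
  | .evar _ ts => 1 + tsizeL ts
def tsizeL : List Tm → ℕ
  | [] => 0
  | t :: ts => tsize t + tsizeL ts
end

/-- size of a guard list -/
def gsize (Q : List (Tm × Tm)) : ℕ := (Q.map (fun q => tsize q.1 + tsize q.2)).sum

lemma gsize_append (Q₁ Q₂ : List (Tm × Tm)) : gsize (Q₁ ++ Q₂) = gsize Q₁ + gsize Q₂ := by
  simp [gsize]

lemma gsize_cons (q : Tm × Tm) (Q : List (Tm × Tm)) :
    gsize (q :: Q) = tsize q.1 + tsize q.2 + gsize Q := by
  simp [gsize]

lemma gsize_zip (ts ss : List Tm) (h : ts.length = ss.length) :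
    gsize (ts.zip ss) = tsizeL ts + tsizeL ss := by
  induction ts generalizing ss with
  | nil =>
    cases ss with
    | nil => simp [gsize, tsizeL]
    | cons b l => simp at h
  | cons a l ih =>
    cases ss with
    | nil => simp at h
    | cons b l' =>
      have h' : l.length = l'.length := by simpa using h
      simp only [List.zip_cons_cons, gsize_cons, tsizeL, ih l' h']
      omega

/-- ordinal measure of a guarded goal -/
noncomputable def ogoal (g : GGoal) : Ordinal.{0} := ω * g.univ + gsize g.guards

/-- ordinal measure of a state -/
noncomputable def omeas (S : StateF) : Multiset Ordinal.{0} :=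
  ((S.map ogoal : List Ordinal.{0}) : Multiset Ordinal.{0})

lemma omeas_nil : omeas [] = 0 := rfl

lemma omeas_cons (g : GGoal) (S : StateF) : omeas (g :: S) = ogoal g ::ₘ omeas S := by
  simp [omeas]

lemma omeas_append (S₁ S₂ : StateF) : omeas (S₁ ++ S₂) = omeas S₁ + omeas S₂ := by
  simp [omeas]

lemma omeas_mid_lt {g g' : GGoal} (S₁ S₂ : StateF) (h : ogoal g' < ogoal g) :
    Multiset.IsDershowitzMannaLT (omeas (S₁ ++ g' :: S₂)) (omeas (S₁ ++ g :: S₂)) := by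
  refine ⟨omeas S₁ + omeas S₂, {ogoal g'}, {ogoal g}, by simp, ?_, ?_, by simp [h]⟩
  · rw [omeas_append, omeas_cons, ← Multiset.singleton_add]; abel
  · rw [omeas_append, omeas_cons, ← Multiset.singleton_add]; abel

lemma omeas_del_lt (g : GGoal) (S₁ S₂ : StateF) :
    Multiset.IsDershowitzMannaLT (omeas (S₁ ++ S₂)) (omeas (S₁ ++ g :: S₂)) := by
  refine ⟨omeas S₁ + omeas S₂, 0, {ogoal g}, by simp, by simp [omeas_append], ?_, by simp⟩
  rw [omeas_append, omeas_cons, ← Multiset.singleton_add]; abel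

lemma ogoal_elim {m : ℕ} (hm : 0 < m) (Q Q' : List (Tm × Tm)) (B B' : Tgt) :
    ogoal ⟨m - 1, Q', B'⟩ < ogoal ⟨m, Q, B⟩ := by
  unfold ogoal
  simp only
  have hcast : ((m - 1 : ℕ) : Ordinal) + 1 = (m : Ordinal) := by
    norm_cast
    omega
  have h1 : ω * ((m - 1 : ℕ) : Ordinal) + (gsize Q' : Ordinal) < ω * (m : Ordinal) := by
    calc ω * ((m - 1 : ℕ) : Ordinal) + (gsize Q' : Ordinal)
        < ω * ((m - 1 : ℕ) : Ordinal) + ω :=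
          (add_lt_add_iff_left _).2 (Ordinal.nat_lt_omega0 _)
      _ = ω * (((m - 1 : ℕ) : Ordinal) + 1) := by rw [mul_add_one]
      _ = ω * (m : Ordinal) := by rw [hcast]
  exact h1.trans_le (le_add_of_nonneg_right zero_le)

lemma red_meas {S T : StateF} (h : Red S T) :
    Multiset.IsDershowitzMannaLT (omeas T) (omeas S) := by
  cases h with
  | @dec S₁ S₂ m f Q₁ Q₂ B ts ss hlen =>
    apply omeas_mid_lt
    unfold ogoal
    simp only
    apply (add_lt_add_iff_left _).2
    rw [Nat.cast_lt]
    rw [gsize_append, gsize_append, gsize_append, gsize_cons, gsize_zip ts ss hlen]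
    simp only [tsize]
    omega
  | @elimL S₁ S₂ m y t Q₁ Q₂ B hy hns =>
    exact omeas_mid_lt _ _ (ogoal_elim (Nat.zero_lt_of_lt hy) _ _ _ _)
  | @elimR S₁ S₂ m y t Q₁ Q₂ B hy hns =>
    exact omeas_mid_lt _ _ (ogoal_elim (Nat.zero_lt_of_lt hy) _ _ _ _)
  | occL hy hs => exact omeas_del_lt _ _ _
  | occR hy hs => exact omeas_del_lt _ _ _

lemma no_descent {α : Type*} {r : α → α → Prop} (wf : WellFounded r) (g : ℕ → α) :
    ¬ ∀ n, r (g (n + 1)) (g n) := by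
  intro h
  have H : ∀ a, ∀ n, g n = a → False := by
    intro a
    induction a using WellFounded.induction wf with
    | _ a ih =>
      intro n hn
      exact ih (g (n + 1)) (hn ▸ h n) (n + 1) rfl
  exact H (g 0) 0 rfl

end TerminationAux

/-- the reduction relation on normalized state formulas is
    terminating: there is no infinite sequence `S₀ ⟶ S₁ ⟶ S₂ ⟶ ⋯` of
    reduction steps. -/
theorem reduction_terminates :
    ∀ f : Nat → StateF, ¬ ∀ i, Red (f i) (f (i + 1)) := by
  intro f h
  exact no_descent Multiset.wellFounded_isDershowitzMannaLT (fun i => omeas (f i)) (fun n => red_meas (h n))
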